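/- For integers L ≥ 2, the generating series Z(L) := ∑_{k≥0} (12√3)^{-k} · #T¹(L,k), where #T¹(L,k) = 4^{k-1} (2L+3k-5)!!/(k!(2L+k-1)!!) · L·C(2L,L), is equal to 6^L (2L-5)!!/(8√3 · L!). -/

import Mathlib

open scoped Nat

noncomputable section StmtAux

namespace Stmt0

def pr (c : ℝ) (n : ℕ) : ℝ := ∏ l ∈ Finset.range n, (c + 2*l)

lemma pr_zero (c : ℝ) : pr c 0 = 1 := by simp [pr]

lemma pr_succ (c : ℝ) (n : ℕ) : pr c (n+1) = pr c n * (c + 2*n) := by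
  simp [pr, Finset.prod_range_succ]

lemma pr_succ' (c : ℝ) (n : ℕ) : pr c (n+1) = c * pr (c+2) n := by
  rw [pr, Finset.prod_range_succ', pr]
  rw [Finset.prod_congr rfl (fun l _ => by push_cast; ring : ∀ l ∈ Finset.range n,
    (c + 2*((l:ℕ)+1:ℕ)) = (c + 2 + 2*l))]
  push_cast; ring

lemma pr_pos {c : ℝ} (hc : 0 < c) (n : ℕ) : 0 < pr c n := by
  apply Finset.prod_pos
  intro l _
  have : (0:ℝ) ≤ 2*l := by positivity
  linarith

/-- coefficient polynomials: `pc k` evaluated at `m` gives `[z^k] C(z)^m` where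
`C` is the generating function with `C^2 = 1 + z C^3`. -/
def pc (k : ℕ) : Polynomial ℝ :=
  if k = 0 then 1 else
    Polynomial.C (((2:ℝ)^k * (k)!)⁻¹) * (Polynomial.X *
      ∏ l ∈ Finset.range (k-1), (Polynomial.X + Polynomial.C ((k:ℝ) + 2*(l+1))))

def cc (x : ℝ) (k : ℕ) : ℝ := (pc k).eval x

lemma cc_zero (x : ℝ) : cc x 0 = 1 := by simp [cc, pc]

lemma cc_succ (x : ℝ) (k : ℕ) :
    cc x (k+1) = x * pr (x + k + 3) k / ((2:ℝ)^(k+1) * ((k+1))!) := by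
  simp only [cc, pc, if_neg (Nat.succ_ne_zero k), Nat.add_sub_cancel]
  rw [Polynomial.eval_mul, Polynomial.eval_mul, Polynomial.eval_prod]
  simp only [Polynomial.eval_add, Polynomial.eval_X, Polynomial.eval_C]
  rw [pr, Finset.prod_congr rfl (fun l _ => by push_cast; ring : ∀ l ∈ Finset.range k,
    (x + ((((k+1:ℕ)):ℝ) + 2*((l:ℝ)+1))) = (x + k + 3 + 2*l))]
  push_cast
  ring

lemma cc_zero_arg (k : ℕ) (hk : 1 ≤ k) : cc 0 k = 0 := by
  obtain ⟨j, rfl⟩ := Nat.exists_eq_add_of_le hk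
  rw [add_comm, cc_succ]
  simp

lemma cc_pos {x : ℝ} (hx : 0 < x) (k : ℕ) : 0 < cc x k := by
  cases k with
  | zero => rw [cc_zero]; norm_num
  | succ j =>
      rw [cc_succ]
      have h1 : 0 < pr (x + j + 3) j := pr_pos (by positivity) j
      positivity

lemma pascal (x : ℝ) (k : ℕ) :
    cc x (k+1) = cc (x-2) (k+1) + cc (x+1) k := by
  cases k with
  | zero =>
      rw [cc_succ, cc_succ, cc_zero]
      norm_num [pr_zero, Nat.factorial]
      ring
  | succ j =>
      rw [cc_succ, cc_succ, cc_succ]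
      have h1 : pr (x + ((j:ℝ)+1) + 3) (j+1) = pr (x + j + 4) j * (x + 3*j + 4) := by
        rw [show x + ((j:ℝ)+1) + 3 = x + j + 4 by ring, pr_succ]
        ring
      have h2 : pr (x - 2 + ((j:ℝ)+1) + 3) (j+1) = (x + j + 2) * pr (x + j + 4) j := by
        rw [show x - 2 + ((j:ℝ)+1) + 3 = x + j + 2 by ring, pr_succ']
        rw [show x + (j:ℝ) + 2 + 2 = x + j + 4 by ring]
      have h3 : x + 1 + (j:ℝ) + 3 = x + j + 4 := by ring
      push_cast
      rw [h3, h1, h2]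
      have hfac : (((j+1+1)! : ℕ) : ℝ) = ((j:ℝ)+2) * (((j+1)! : ℕ) : ℝ) := by
        rw [show (j+1+1) = (j+1)+1 from rfl, Nat.factorial_succ]
        push_cast; ring
      have hne1 : ((2:ℝ)^(j+1+1) * (((j+1+1)! : ℕ) : ℝ)) ≠ 0 := by positivity
      have hne2 : ((2:ℝ)^(j+1) * (((j+1)! : ℕ) : ℝ)) ≠ 0 := by positivity
      field_simp
      rw [hfac]
      ring

lemma cc_ratio {x : ℝ} (hx : 0 < x) (k : ℕ) :
    cc x (k+2) = cc x k * ((x + 3*k) * (x + 3*k + 2) * (x + 3*k + 4)) /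
      ((x + k + 2) * (4*(k+1)*(k+2))) := by
  cases k with
  | zero =>
      have e2 : cc x 2 = x * (x+4) / 8 := by
        have h := cc_succ x 1
        rw [pr_succ, pr_zero] at h
        norm_num [Nat.factorial] at h
        rw [h]
        ring
      rw [show (0:ℕ)+2 = 2 from rfl, e2, cc_zero]
      have hne : x + 2 ≠ 0 := by positivity
      field_simp
      push_cast
      ring
  | succ j =>
      have hj3 : x + (j:ℝ) + 3 > 0 := by
        have : (0:ℝ) ≤ j := Nat.cast_nonneg j
        linarith
      rw [show (j+1+2 : ℕ) = (j+2)+1 by ring, cc_succ, cc_succ]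
      have h1 : pr (x + ((j:ℝ)+2) + 3) (j+2) = pr (x + j + 5) j * (x + 3*j + 5) * (x + 3*j + 7) := by
        rw [show x + ((j:ℝ)+2) + 3 = x + j + 5 by ring, pr_succ, pr_succ]
        push_cast; ring
      have h2 : pr (x + (j:ℝ) + 5) j = pr (x + j + 3) j * (x + 3*j + 3) / (x + j + 3) := by
        have ha := pr_succ' (x + j + 3) j
        have hb := pr_succ (x + j + 3) j
        rw [show x + (j:ℝ) + 3 + 2 = x + j + 5 by ring] at ha
        field_simp
        linear_combination hb - ha
      push_cast
      rw [h1, h2]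
      have hfa : (((j+2+1)! : ℕ) : ℝ) = ((j:ℝ)+3) * ((j:ℝ)+2) * (((j+1)! : ℕ) : ℝ) := by
        rw [show (j+2+1) = ((j+1)+1)+1 from rfl, Nat.factorial_succ, Nat.factorial_succ]
        push_cast; ring
      rw [hfa]
      have hne1 : (((j+1)! : ℕ) : ℝ) ≠ 0 := by positivity
      have hne2 : x + (j:ℝ) + 3 ≠ 0 := ne_of_gt hj3
      field_simp
      ring

theorem conv : ∀ (k : ℕ) (x : ℝ),
    ∑ i ∈ Finset.range (k+1), cc 1 i * cc x (k-i) = cc (x+1) k := by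
  intro k
  induction k using Nat.strong_induction_on with
  | _ k IH =>
    cases k with
    | zero => intro x; simp [cc_zero]
    | succ j =>
      intro x
      set p : Polynomial ℝ := (∑ i ∈ Finset.range (j+2), Polynomial.C (cc 1 i) * pc (j+1-i))
        - (pc (j+1)).comp (Polynomial.X + Polynomial.C 1) with hp
      have hpeval : ∀ y : ℝ, p.eval y
          = (∑ i ∈ Finset.range (j+2), cc 1 i * cc y (j+1-i)) - cc (y+1) (j+1) := by
        intro y
        simp only [hp, Polynomial.eval_sub, Polynomial.eval_finset_sum, Polynomial.eval_mul,
          Polynomial.eval_C, Polynomial.eval_comp, Polynomial.eval_add, Polynomial.eval_X, cc]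
      have hdiff : ∀ y : ℝ, p.eval y = p.eval (y - 2) := by
        intro y
        rw [hpeval, hpeval]
        have key : ∀ i ∈ Finset.range (j+1),
            cc 1 i * cc y (j+1-i) - cc 1 i * cc (y-2) (j+1-i)
              = cc 1 i * cc (y+1) (j-i) := by
          intro i hi
          have hij : i ≤ j := Nat.lt_succ_iff.mp (Finset.mem_range.mp hi)
          have hsub : j+1-i = (j-i)+1 := by omega
          rw [hsub, ← mul_sub]
          have hpas := pascal y (j-i)
          rw [hpas]; ring
        have e1 : (∑ i ∈ Finset.range (j+2), cc 1 i * cc y (j+1-i))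
                - (∑ i ∈ Finset.range (j+2), cc 1 i * cc (y-2) (j+1-i))
                = cc (y+2) j := by
          rw [← Finset.sum_sub_distrib, Finset.sum_range_succ]
          have hz : cc 1 (j+1) * cc y (j+1-(j+1)) - cc 1 (j+1) * cc (y-2) (j+1-(j+1)) = 0 := by
            simp [cc_zero]
          rw [hz, add_zero, Finset.sum_congr rfl key]
          have := IH j (Nat.lt_succ_self j) (y+1)
          rw [show y+1+1 = y+2 by ring] at this
          exact this
        have e2 : cc (y+1) (j+1) - cc (y-2+1) (j+1) = cc (y+2) j := by
          have hpas := pascal (y+1) j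
          rw [show y+1-2 = y-2+1 by ring, show y+1+1 = y+2 by ring] at hpas
          linarith
        linarith
      have h0 : p.eval 0 = 0 := by
        rw [hpeval]
        have hzero : ∀ i ∈ Finset.range (j+1), cc 1 i * cc (0:ℝ) (j+1-i) = 0 := by
          intro i hi
          have hij : i ≤ j := Nat.lt_succ_iff.mp (Finset.mem_range.mp hi)
          have h1 : 1 ≤ j+1-i := by omega
          rw [cc_zero_arg _ h1, mul_zero]
        rw [Finset.sum_range_succ, Finset.sum_eq_zero hzero, zero_add, Nat.sub_self, cc_zero,
          mul_one, show (0:ℝ)+1 = 1 by norm_num]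
        ring
      have hneg : ∀ n : ℕ, p.eval (-2 * (n:ℝ)) = 0 := by
        intro n
        induction n with
        | zero => simpa using h0
        | succ m ihm =>
            have h := hdiff (-2 * (m:ℝ))
            rw [ihm] at h
            have harg : (-2*(m:ℝ)) - 2 = -2*(((m+1:ℕ)):ℝ) := by push_cast; ring
            rw [harg] at h
            exact h.symm
      have hpz : p = 0 := by
        apply Polynomial.eq_zero_of_infinite_isRoot
        apply Set.infinite_of_injective_forall_mem (f := fun n : ℕ => -2 * (n:ℝ))
        · intro a b hab
          simp only at hab
          have : (a:ℝ) = b := by linarith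
          exact_mod_cast this
        · intro n
          exact hneg n
      have hfin := hpeval x
      rw [hpz] at hfin
      simp only [Polynomial.eval_zero] at hfin
      linarith
def zc : ℝ := 2 / (3 * Real.sqrt 3)

lemma s3_pos : (0:ℝ) < Real.sqrt 3 := Real.sqrt_pos.mpr (by norm_num)

lemma s3_sq : Real.sqrt 3 ^ 2 = 3 := Real.sq_sqrt (by norm_num)

lemma zc_pos : 0 < zc := by
  have := s3_pos
  unfold zc
  positivity

lemma zc_sq : zc^2 = 4/27 := by
  unfold zc
  rw [div_pow, mul_pow, s3_sq]
  norm_num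

def u (x : ℝ) (k : ℕ) : ℝ := cc x k * zc ^ k

lemma u_pos {x : ℝ} (hx : 0 < x) (k : ℕ) : 0 < u x k :=
  mul_pos (cc_pos hx k) (pow_pos zc_pos k)

lemma u_step {x : ℝ} (hx : 1 ≤ x) (k : ℕ) (hk : x^2 + 3*x + 10 ≤ (k:ℝ)) :
    ((k:ℝ)+2) * u x (k+2) ≤ ((k:ℝ) - 1/2) * u x k := by
  have hx0 : 0 < x := lt_of_lt_of_le one_pos hx
  set K : ℝ := (k:ℝ) with hK
  have hK0 : 0 ≤ K := Nat.cast_nonneg k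
  have hcc := cc_ratio hx0 k
  have hD : (0:ℝ) < (x + K + 2) * (4*(K+1)*(K+2)) := by positivity
  rw [eq_div_iff (ne_of_gt hD)] at hcc
  have hkey : 2*(x+3*K)*(x+3*K+2)*(x+3*K+4) ≤ 27*(2*K-1)*(K+1)*(x+K+2) := by
    nlinarith [sq_nonneg x, sq_nonneg K, sq_nonneg (x*K), mul_nonneg hK0 hK0,
      mul_le_mul_of_nonneg_left hk (by positivity : (0:ℝ) ≤ 27*K),
      mul_le_mul_of_nonneg_left hk (by nlinarith : (0:ℝ) ≤ 9*x^2),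
      mul_le_mul_of_nonneg_left hk (by nlinarith : (0:ℝ) ≤ 36*x),
      mul_le_mul_of_nonneg_left hk (by norm_num : (0:ℝ) ≤ 249)]
  have e : u x (k+2) * (27 * ((x + K + 2) * (4*(K+1)*(K+2))))
      = u x k * (4*((x+3*K)*(x+3*K+2)*(x+3*K+4))) := by
    unfold u
    rw [pow_add]
    rw [zc_sq]
    linear_combination (4 * zc^k) * hcc
  have hu0 : 0 < u x k := u_pos hx0 k
  have hmul : (2*(u x k)*(K+2)) * (2*(x+3*K)*(x+3*K+2)*(x+3*K+4))
      ≤ (2*(u x k)*(K+2)) * (27*(2*K-1)*(K+1)*(x+K+2)) :=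
    mul_le_mul_of_nonneg_left hkey (by positivity)
  have final : (((K:ℝ)+2) * u x (k+2)) * (27 * ((x + K + 2) * (4*(K+1)*(K+2))))
      ≤ (((K:ℝ) - 1/2) * u x k) * (27 * ((x + K + 2) * (4*(K+1)*(K+2)))) := by
    nlinarith [hmul, e]
  have h27D : (0:ℝ) < 27 * ((x + K + 2) * (4*(K+1)*(K+2))) := by positivity
  push_cast
  exact le_of_mul_le_mul_right final h27D

lemma summable_u (m : ℕ) (hm : 1 ≤ m) : Summable (u (m:ℝ)) := by
  set x : ℝ := (m:ℝ) with hxdef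
  have hx : 1 ≤ x := by rw [hxdef]; exact_mod_cast hm
  have hx0 : 0 < x := lt_of_lt_of_le one_pos hx
  set k0 : ℕ := m^2 + 3*m + 10 with hk0def
  have hk0 : ∀ j : ℕ, x^2 + 3*x + 10 ≤ ((k0 + j : ℕ):ℝ) := by
    intro j
    have : ((k0:ℕ):ℝ) = x^2 + 3*x + 10 := by rw [hk0def]; push_cast; ring
    push_cast
    push_cast at this
    nlinarith [Nat.cast_nonneg (α := ℝ) j]
  set v : ℕ → ℝ := fun k => (k:ℝ) * u x k with hvdef
  have hv0 : ∀ k, 0 ≤ v k := fun k => mul_nonneg (Nat.cast_nonneg k) (u_pos hx0 k).le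
  have hstep : ∀ j : ℕ, u x (k0+j) + 2 * v (k0+j+2) ≤ 2 * v (k0+j) := by
    intro j
    have h := u_step hx (k0+j) (hk0 j)
    have h1 : v (k0+j+2) = (((k0+j:ℕ):ℝ)+2) * u x ((k0+j)+2) := by
      rw [hvdef]; push_cast; ring_nf
    have h2 : v (k0+j) = ((k0+j:ℕ):ℝ) * u x (k0+j) := rfl
    have hupos := u_pos hx0 (k0+j)
    rw [h1, h2]
    have : (k0+j+2 : ℕ) = (k0+j)+2 := rfl
    nlinarith [h]
  have hQ : ∀ j : ℕ, (∑ i ∈ Finset.range (k0+j), u x i) + 2*v (k0+j) + 2*v (k0+j+1)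
      ≤ (∑ i ∈ Finset.range k0, u x i) + 2*v k0 + 2*v (k0+1) := by
    intro j
    induction j with
    | zero => simp
    | succ n ihn =>
        have hsum : ∑ i ∈ Finset.range (k0+(n+1)), u x i
            = (∑ i ∈ Finset.range (k0+n), u x i) + u x (k0+n) := by
          rw [show k0+(n+1) = (k0+n)+1 from rfl, Finset.sum_range_succ]
        rw [hsum]
        have := hstep n
        have e1 : k0+(n+1) = (k0+n)+1 := rfl
        rw [e1]
        have e3 : v (k0+n+1+1) = v (k0+n+2) := by congr 1
        rw [e3]
        linarith
  apply summable_of_sum_range_le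
    (c := (∑ i ∈ Finset.range k0, u x i) + 2*v k0 + 2*v (k0+1))
  · intro k; exact (u_pos hx0 k).le
  · intro n
    rcases le_or_gt n k0 with h | h
    · have hsub : ∑ i ∈ Finset.range n, u x i ≤ ∑ i ∈ Finset.range k0, u x i :=
        Finset.sum_le_sum_of_subset_of_nonneg (Finset.range_subset_range.mpr h)
          (fun i _ _ => (u_pos hx0 i).le)
      linarith [hv0 k0, hv0 (k0+1)]
    · obtain ⟨j, rfl⟩ : ∃ j, n = k0 + j := ⟨n - k0, by omega⟩
      linarith [hQ j, hv0 (k0+j), hv0 (k0+j+1)]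

def Qv (m : ℕ) : ℝ := ∑' k, u (m:ℝ) k

lemma summable_u_norm (m : ℕ) (hm : 1 ≤ m) : Summable (fun k => ‖u (m:ℝ) k‖) := by
  have h := summable_u m hm
  apply h.congr
  intro k
  rw [Real.norm_eq_abs, abs_of_nonneg (u_pos (by exact_mod_cast hm : (0:ℝ) < (m:ℝ)) k).le]

lemma cauchy (m : ℕ) (hm : 1 ≤ m) : Qv (m+1) = Qv 1 * Qv m := by
  have hf := summable_u_norm 1 le_rfl
  have hg := summable_u_norm m hm
  rw [Qv, Qv, Qv, tsum_mul_tsum_eq_tsum_sum_antidiagonal_of_summable_norm hf hg]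
  apply tsum_congr
  intro n
  rw [Finset.Nat.sum_antidiagonal_eq_sum_range_succ_mk]
  have hterm : ∀ i ∈ Finset.range (n+1),
      u ((1:ℕ):ℝ) i * u (m:ℝ) (n-i) = (cc 1 i * cc (m:ℝ) (n-i)) * zc^n := by
    intro i hi
    have hin : i ≤ n := Nat.lt_succ_iff.mp (Finset.mem_range.mp hi)
    unfold u
    rw [Nat.cast_one]
    rw [show zc^n = zc^i * zc^(n-i) by rw [← pow_add, Nat.add_sub_cancel' hin]]
    ring
  rw [Finset.sum_congr rfl hterm, ← Finset.sum_mul, conv n (m:ℝ)]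
  unfold u
  congr 1
  push_cast
  ring_nf

lemma cc_two_succ (k : ℕ) : cc 2 (k+1) = cc 3 k := by
  cases k with
  | zero =>
      have h := cc_succ (2:ℝ) 0
      rw [pr_zero] at h
      rw [h, cc_zero]
      norm_num [Nat.factorial]
  | succ j =>
      rw [cc_succ, cc_succ]
      have h1 : pr (2 + ((j:ℝ)+1) + 3) (j+1) = pr ((3:ℝ) + j + 3) j * (3*(j:ℝ) + 6) := by
        rw [show (2:ℝ) + ((j:ℝ)+1) + 3 = (3:ℝ) + j + 3 by ring, pr_succ]
        ring
      push_cast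
      rw [h1]
      have hfac : (((j+1+1)! : ℕ) : ℝ) = ((j:ℝ)+2) * (((j+1)! : ℕ) : ℝ) := by
        rw [show (j+1+1) = (j+1)+1 from rfl, Nat.factorial_succ]
        push_cast; ring
      rw [hfac]
      have hne : (((j+1)! : ℕ) : ℝ) ≠ 0 := by positivity
      field_simp
      ring

lemma Q1_eq : Qv 1 = Real.sqrt 3 := by
  have hsum1 := summable_u 1 le_rfl
  have hsum2 := summable_u 2 (by norm_num)
  have hsum3 := summable_u 3 (by norm_num)
  set S := Qv 1 with hSdef
  have hS1 : 1 ≤ S := by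
    have h0 : u ((1:ℕ):ℝ) 0 = 1 := by
      unfold u; rw [Nat.cast_one, cc_zero, pow_zero, mul_one]
    have := Summable.le_tsum hsum1 0 (fun j _ => (u_pos (by norm_num) j).le)
    rw [h0] at this
    exact this
  have h2 : Qv 2 = S * S := by
    have := cauchy 1 le_rfl
    rw [show (1:ℕ)+1 = 2 from rfl] at this
    rw [this]
  have h3 : Qv 3 = S * Qv 2 := by
    have := cauchy 2 (by norm_num)
    rw [show (2:ℕ)+1 = 3 from rfl] at this
    rw [this]
  have hfe : Qv 2 = 1 + zc * Qv 3 := by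
    rw [Qv, Summable.tsum_eq_zero_add hsum2]
    have h0 : u ((2:ℕ):ℝ) 0 = 1 := by
      unfold u; rw [cc_zero, pow_zero, mul_one]
    have hsucc : ∀ k : ℕ, u ((2:ℕ):ℝ) (k+1) = zc * u ((3:ℕ):ℝ) k := by
      intro k
      unfold u
      rw [show ((2:ℕ):ℝ) = (2:ℝ) by norm_num, show ((3:ℕ):ℝ) = (3:ℝ) by norm_num,
        cc_two_succ, pow_succ]
      ring
    rw [h0, tsum_congr hsucc, tsum_mul_left]
    rfl
  have heq : S * S = 1 + zc * (S * (S * S)) := by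
    conv_lhs => rw [← h2, hfe, h3, h2]
  set s := Real.sqrt 3 with hsdef
  have hs_pos : 0 < s := s3_pos
  have hsq : s^2 = 3 := s3_sq
  have hz3 : zc * (3*s) = 2 := by
    rw [zc, hsdef]
    field_simp
  have key : (S - s)^2 * (2*S + s) = 0 := by
    linear_combination (-3*s) * heq + (-(S^3)) * hz3 + s * hsq
  have h2S : 0 < 2*S + s := by linarith
  have hsq0 : (S - s)^2 = 0 := by
    rcases mul_eq_zero.mp key with h | h
    · exact h
    · linarith
  have := pow_eq_zero_iff (n := 2) (by norm_num) |>.mp hsq0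
  linarith [sub_eq_zero.mp this]

lemma Q_val (m : ℕ) (hm : 1 ≤ m) : Qv m = Real.sqrt 3 ^ m := by
  induction m, hm using Nat.le_induction with
  | base => rw [Q1_eq, pow_one]
  | succ n hn ihn =>
      rw [cauchy n hn, Q1_eq, ihn, pow_succ]
      ring
lemma zc_eq : zc = 2 / (3 * Real.sqrt 3) := rfl

lemma df_prod (a : ℕ) : ∀ n : ℕ, ((Nat.doubleFactorial (a + 2*n) : ℕ) : ℝ)
    = ((Nat.doubleFactorial a : ℕ) : ℝ) * pr ((a:ℝ)+2) n := by
  intro n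
  induction n with
  | zero => simp [pr_zero]
  | succ i ih =>
      have h : a + 2*(i+1) = (a + 2*i) + 2 := by ring
      rw [h, Nat.doubleFactorial_add_two, pr_succ]
      push_cast
      rw [ih]
      push_cast
      ring

lemma hC_df (L : ℕ) (hL : 1 ≤ L) :
    (((2*L).choose L : ℕ) : ℝ) * ((L)! : ℝ)
      = 2^L * ((Nat.doubleFactorial (2*L-1) : ℕ) : ℝ) := by
  have h1 : (2*L).choose L * ((L)! * (L)!) = (2*L)! := by
    have := Nat.choose_mul_factorial_mul_factorial (show L ≤ 2*L by omega)
    rw [show 2*L - L = L by omega] at this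
    rw [← this]; ring
  have h2 : (2*L)! = (2*L)‼ * (2*L-1)‼ := by
    have h3 : 2*L = (2*L-1)+1 := by omega
    rw [h3, Nat.factorial_eq_mul_doubleFactorial]
    simp
  have h4 : (2*L)‼ = 2^L * (L)! := Nat.doubleFactorial_two_mul L
  have hne : ((L)! : ℝ) ≠ 0 := by positivity
  have key : (((2*L).choose L : ℕ) : ℝ) * (((L)! : ℝ) * ((L)! : ℝ))
      = (2^L * ((L)! : ℝ)) * ((Nat.doubleFactorial (2*L-1) : ℕ) : ℝ) := by
    rw [h4] at h2
    rw [h2] at h1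
    exact_mod_cast congrArg (fun x : ℕ => (x:ℝ)) h1
  have key2 : ((((2*L).choose L : ℕ) : ℝ) * ((L)! : ℝ)) * ((L)! : ℝ)
      = (2^L * ((Nat.doubleFactorial (2*L-1) : ℕ) : ℝ)) * ((L)! : ℝ) := by
    linear_combination key
  exact mul_right_cancel₀ hne key2

set_option maxHeartbeats 2000000 in
theorem statement0' (L : ℕ) (hL : 2 ≤ L) :
    ∑' k : ℕ,
      ((12 * Real.sqrt 3)⁻¹) ^ k *
        ((4 : ℝ) ^ ((k : ℤ) - 1) *
            (Nat.doubleFactorial (2 * L + 3 * k - 5) : ℝ) /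
            ((Nat.factorial k : ℝ) * (Nat.doubleFactorial (2 * L + k - 1) : ℝ)) *
          ((L : ℝ) * (Nat.choose (2 * L) L : ℝ)))
      = 6 ^ L * (Nat.doubleFactorial (2 * L - 5) : ℝ) /
          (8 * Real.sqrt 3 * (Nat.factorial L : ℝ)) := by
  obtain ⟨n, rfl⟩ : ∃ n, L = n + 2 := ⟨L - 2, by omega⟩
  have hs := s3_pos
  have hs_ne : Real.sqrt 3 ≠ 0 := ne_of_gt hs
  have hLcast : (((n+2 : ℕ)) : ℝ) = (n:ℝ) + 2 := by push_cast; ring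
  have hm1 : 1 ≤ 2*(n+2) - 3 := by omega
  have hm2 : 1 ≤ 2*(n+2) - 1 := by omega
  have hc1 : ((2*(n+2)-3 : ℕ) : ℝ) = 2*((n+2:ℕ):ℝ) - 3 := by
    rw [Nat.cast_sub (by omega)]; push_cast; ring
  have hc2 : ((2*(n+2)-1 : ℕ) : ℝ) = 2*((n+2:ℕ):ℝ) - 1 := by
    rw [Nat.cast_sub (by omega)]; push_cast; ring
  have hsum1 := summable_u (2*(n+2)-3) hm1
  have hsum2 := summable_u (2*(n+2)-1) hm2
  have hL0 : (0:ℝ) < ((n+2:ℕ):ℝ) := by rw [hLcast]; positivity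
  have hn0 : (0:ℝ) ≤ (n:ℝ) := Nat.cast_nonneg n
  have h2L3 : (0:ℝ) < 2*((n+2:ℕ):ℝ)-3 := by rw [hLcast]; linarith
  have h2L1 : (0:ℝ) < 2*((n+2:ℕ):ℝ)-1 := by rw [hLcast]; linarith
  have hdf5pos : (0:ℝ) < ((Nat.doubleFactorial (2*(n+2)-5) : ℕ) : ℝ) := by
    exact_mod_cast Nat.doubleFactorial_pos _
  have hdf51 : ((Nat.doubleFactorial (2*(n+2)-1) : ℕ) : ℝ)
      = (2*((n+2:ℕ):ℝ)-1)*(2*((n+2:ℕ):ℝ)-3) * ((Nat.doubleFactorial (2*(n+2)-5) : ℕ) : ℝ) := by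
    obtain hn | hn1 : n = 0 ∨ 1 ≤ n := by omega
    · subst hn
      norm_num [Nat.doubleFactorial]
    · have h1 : 2*(n+2)-1 = ((2*(n+2)-5)+2)+2 := by omega
      have h2 : ((2*(n+2)-5 : ℕ) : ℝ) = 2*((n:ℝ)+2)-5 := by
        rw [Nat.cast_sub (by omega)]; push_cast; ring
      rw [h1, Nat.doubleFactorial_add_two, Nat.doubleFactorial_add_two]
      push_cast
      rw [h2]
      ring
  have hinv : (12*Real.sqrt 3)⁻¹ = zc/8 := by
    rw [zc_eq]
    rw [div_div]
    rw [inv_eq_one_div]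
    rw [div_eq_div_iff (by positivity) (by positivity)]
    ring
  set G : ℝ := ((n+2:ℕ):ℝ) * ((2*(n+2)).choose (n+2) : ℝ) / 4 with hGdef
  have hpt : ∀ k : ℕ,
      ((12 * Real.sqrt 3)⁻¹) ^ k *
        ((4 : ℝ) ^ ((k : ℤ) - 1) *
            (Nat.doubleFactorial (2 * (n+2) + 3 * k - 5) : ℝ) /
            ((Nat.factorial k : ℝ) * (Nat.doubleFactorial (2 * (n+2) + k - 1) : ℝ)) *
          (((n+2:ℕ) : ℝ) * (Nat.choose (2 * (n+2)) (n+2) : ℝ)))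
      = (3*G/(4*((n+2:ℕ):ℝ)*(2*((n+2:ℕ):ℝ)-3))) * u ((2*(n+2)-3 : ℕ):ℝ) k
        - (G/(4*((n+2:ℕ):ℝ)*(2*((n+2:ℕ):ℝ)-1))) * u ((2*(n+2)-1 : ℕ):ℝ) k := by
    intro k
    cases k with
    | zero =>
        have e1 : 2*(n+2)+3*0-5 = 2*(n+2)-5 := by omega
        have e2 : 2*(n+2)+0-1 = 2*(n+2)-1 := by omega
        rw [e1, e2, hdf51]
        simp only [u, cc_zero, pow_zero, one_mul, mul_one, Nat.factorial_zero, Nat.cast_one]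
        rw [show ((0:ℕ):ℤ) - 1 = -1 by norm_num, zpow_neg_one, hGdef]
        obtain ⟨D5, hD⟩ : ∃ y, ((Nat.doubleFactorial (2*(n+2)-5) : ℕ) : ℝ) = y := ⟨_, rfl⟩
        obtain ⟨CBv, hCB⟩ : ∃ y, ((Nat.choose (2*(n+2)) (n+2) : ℕ) : ℝ) = y := ⟨_, rfl⟩
        obtain ⟨X, hX⟩ : ∃ y, (((n+2):ℕ) : ℝ) = y := ⟨_, rfl⟩
        rw [hD] at hdf5pos
        rw [hX] at hL0 h2L1 h2L3
        rw [hD, hCB, hX]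
        field_simp [h2L1.ne', h2L3.ne', hdf5pos.ne', hL0.ne']
        ring
    | succ j =>
        have h4k : (4:ℝ) ^ ((((j+1):ℕ):ℤ) - 1) = 4^(j+1) / 4 := by
          rw [zpow_sub₀ (by norm_num : (4:ℝ) ≠ 0), zpow_natCast, zpow_one]
        have hA : 2*(n+2)+3*(j+1)-5 = (2*(n+2)+(j+1)-3) + 2*j := by omega
        have hB : 2*(n+2)+(j+1)-1 = (2*(n+2)+(j+1)-3) + 2 := by omega
        have hac : ((2*(n+2)+(j+1)-3 : ℕ) : ℝ) = 2*((n+2:ℕ):ℝ) + (j:ℝ) - 2 := by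
          rw [Nat.cast_sub (by omega)]; push_cast; ring
        have hdfA : ((Nat.doubleFactorial (2*(n+2)+3*(j+1)-5) : ℕ) : ℝ)
            = ((Nat.doubleFactorial (2*(n+2)+(j+1)-3) : ℕ) : ℝ)
              * pr (((2*(n+2)+(j+1)-3 : ℕ):ℝ)+2) j := by
          rw [hA]; exact df_prod _ j
        have hdfB : ((Nat.doubleFactorial (2*(n+2)+(j+1)-1) : ℕ) : ℝ)
            = (((2*(n+2)+(j+1)-3 : ℕ):ℝ)+2) * ((Nat.doubleFactorial (2*(n+2)+(j+1)-3) : ℕ) : ℝ) := by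
          rw [hB]
          push_cast [Nat.doubleFactorial_add_two]
          ring
        have hcc1 : cc ((2*(n+2)-3 : ℕ):ℝ) (j+1)
            = (2*((n+2:ℕ):ℝ)-3) * pr (((2*(n+2)+(j+1)-3 : ℕ):ℝ)+2) j
              / (2^(j+1) * (((j+1))! : ℝ)) := by
          rw [cc_succ, hc1, show 2*((n+2:ℕ):ℝ)-3+(j:ℝ)+3
            = ((2*(n+2)+(j+1)-3 : ℕ):ℝ)+2 by rw [hac]; ring]
        have hccpos : (0:ℝ) < ((2*(n+2)+(j+1)-3 : ℕ):ℝ)+2 := by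
          rw [hac, hLcast]
          have : (0:ℝ) ≤ (j:ℝ) := Nat.cast_nonneg j
          linarith
        have hpr : pr ((((2*(n+2)+(j+1)-3 : ℕ):ℝ)+2)+2) j
            = pr (((2*(n+2)+(j+1)-3 : ℕ):ℝ)+2) j
              * ((((2*(n+2)+(j+1)-3 : ℕ):ℝ)+2)+2*(j:ℝ)) / (((2*(n+2)+(j+1)-3 : ℕ):ℝ)+2) := by
          have h1 := pr_succ' (((2*(n+2)+(j+1)-3 : ℕ):ℝ)+2) j
          have h2 := pr_succ (((2*(n+2)+(j+1)-3 : ℕ):ℝ)+2) j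
          field_simp
          linear_combination h2 - h1
        have hcc2 : cc ((2*(n+2)-1 : ℕ):ℝ) (j+1)
            = (2*((n+2:ℕ):ℝ)-1) * (pr (((2*(n+2)+(j+1)-3 : ℕ):ℝ)+2) j
              * ((((2*(n+2)+(j+1)-3 : ℕ):ℝ)+2)+2*(j:ℝ)) / (((2*(n+2)+(j+1)-3 : ℕ):ℝ)+2))
              / (2^(j+1) * (((j+1))! : ℝ)) := by
          rw [cc_succ, hc2, show 2*((n+2:ℕ):ℝ)-1+(j:ℝ)+3
            = (((2*(n+2)+(j+1)-3 : ℕ):ℝ)+2)+2 by rw [hac]; ring, hpr]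
        rw [hdfA, hdfB, u, u, hcc1, hcc2, hinv, h4k, hGdef]
        rw [div_pow, show (8:ℝ)^(j+1) = 2^(j+1)*4^(j+1) by
          rw [show (8:ℝ) = 2*4 by norm_num, mul_pow]]
        rw [hac]
        have hdfapos : (0:ℝ) < ((Nat.doubleFactorial (2*(n+2)+(j+1)-3) : ℕ) : ℝ) := by
          exact_mod_cast Nat.doubleFactorial_pos _
        have hfacpos : (0:ℝ) < (((j+1))! : ℝ) := by positivity
        have hzcp := zc_pos
        rw [hac] at hccpos
        have hp2 : ((2:ℝ))^(j+1) ≠ 0 := by positivity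
        have hp4 : ((4:ℝ))^(j+1) ≠ 0 := by positivity
        have hpz : zc^(j+1) ≠ 0 := pow_ne_zero _ (ne_of_gt hzcp)
        obtain ⟨P, hP⟩ : ∃ y, pr (2*(((n+2):ℕ):ℝ) + (j:ℝ) - 2 + 2) j = y := ⟨_, rfl⟩
        obtain ⟨D, hDg⟩ : ∃ y, ((Nat.doubleFactorial (2*(n+2)+(j+1)-3) : ℕ) : ℝ) = y := ⟨_, rfl⟩
        obtain ⟨F, hF⟩ : ∃ y, (((j+1))! : ℝ) = y := ⟨_, rfl⟩
        obtain ⟨CBv, hCB⟩ : ∃ y, ((Nat.choose (2*(n+2)) (n+2) : ℕ) : ℝ) = y := ⟨_, rfl⟩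
        obtain ⟨T2, hT2⟩ : ∃ y, ((2:ℝ))^(j+1) = y := ⟨_, rfl⟩
        obtain ⟨T4, hT4⟩ : ∃ y, ((4:ℝ))^(j+1) = y := ⟨_, rfl⟩
        obtain ⟨ZC, hZC⟩ : ∃ y, zc^(j+1) = y := ⟨_, rfl⟩
        obtain ⟨J, hJ⟩ : ∃ y, ((j:ℕ) : ℝ) = y := ⟨_, rfl⟩
        obtain ⟨X, hX⟩ : ∃ y, (((n+2):ℕ) : ℝ) = y := ⟨_, rfl⟩
        rw [hDg] at hdfapos
        rw [hF] at hfacpos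
        rw [hT2] at hp2
        rw [hT4] at hp4
        rw [hZC] at hpz
        rw [hJ, hX] at hccpos
        rw [hX] at hL0 h2L1 h2L3
        rw [hP, hDg, hF, hCB, hT2, hT4, hZC, hJ, hX]
        have hA2 : (0:ℝ) < 2*X+J := by linarith
        rw [show 2*X+J-2+2 = 2*X+J by ring]
        field_simp [h2L1.ne', h2L3.ne', hdfapos.ne', hL0.ne', hfacpos.ne', hA2.ne',
          hpz, hp2, hp4]
        ring
  rw [tsum_congr hpt, Summable.tsum_sub (hsum1.mul_left _) (hsum2.mul_left _),
    tsum_mul_left, tsum_mul_left]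
  have hQ1 : ∑' k, u ((2*(n+2)-3 : ℕ):ℝ) k = Real.sqrt 3 ^ (2*(n+2)-3) :=
    Q_val _ hm1
  have hQ2 : ∑' k, u ((2*(n+2)-1 : ℕ):ℝ) k = Real.sqrt 3 ^ (2*(n+2)-1) :=
    Q_val _ hm2
  rw [hQ1, hQ2]
  have hpow1 : Real.sqrt 3 ^ (2*(n+2)-3) = 3^n * Real.sqrt 3 := by
    rw [show 2*(n+2)-3 = 2*n+1 by omega, pow_succ, pow_mul, s3_sq]
  have hpow2 : Real.sqrt 3 ^ (2*(n+2)-1) = 3^n * 3 * Real.sqrt 3 := by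
    rw [show 2*(n+2)-1 = 2*(n+1)+1 by omega, pow_succ, pow_mul, s3_sq, pow_succ]
  rw [hpow1, hpow2]
  have hfacpos : (0:ℝ) < (((n+2))! : ℝ) := by positivity
  have hCval : ((Nat.choose (2*(n+2)) (n+2) : ℕ) : ℝ)
      = 2^(n+2) * ((2*((n+2:ℕ):ℝ)-1)*(2*((n+2:ℕ):ℝ)-3)
        * ((Nat.doubleFactorial (2*(n+2)-5) : ℕ) : ℝ)) / (((n+2))! : ℝ) := by
    have h := hC_df (n+2) (by omega)
    rw [hdf51] at h
    rw [eq_div_iff (ne_of_gt hfacpos)]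
    linear_combination h
  have h6 : (6:ℝ)^(n+2) = 2^(n+2) * (3^n * 9) := by
    rw [show (6:ℝ) = 2*3 by norm_num, mul_pow, pow_add (3:ℝ) n 2]
    norm_num
  rw [hGdef, hCval, h6]
  rw [eq_div_iff (by positivity : 8*Real.sqrt 3*(((n+2))! : ℝ) ≠ 0)]
  have hss : Real.sqrt 3 ^ 2 = 3 := s3_sq
  obtain ⟨D5, hD⟩ : ∃ y, ((Nat.doubleFactorial (2*(n+2)-5) : ℕ) : ℝ) = y := ⟨_, rfl⟩
  obtain ⟨F, hF⟩ : ∃ y, (((n+2))! : ℝ) = y := ⟨_, rfl⟩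
  obtain ⟨T2, hT2⟩ : ∃ y, ((2:ℝ))^(n+2) = y := ⟨_, rfl⟩
  obtain ⟨T3, hT3⟩ : ∃ y, ((3:ℝ))^n = y := ⟨_, rfl⟩
  obtain ⟨sq3, hsq3⟩ : ∃ y, Real.sqrt 3 = y := ⟨_, rfl⟩
  obtain ⟨X, hX⟩ : ∃ y, (((n+2):ℕ) : ℝ) = y := ⟨_, rfl⟩
  rw [hD] at hdf5pos
  rw [hF] at hfacpos
  rw [hsq3] at hss hs hs_ne
  rw [hX] at hL0 h2L1 h2L3
  rw [hD, hF, hT2, hT3, hsq3, hX]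
  field_simp [h2L1.ne', h2L3.ne', hL0.ne', hfacpos.ne', hdf5pos.ne', hs_ne]
  ring_nf
  rw [hss]
  have hq : (3 - X * 8 + X ^ 2 * 4) ≠ 0 := by nlinarith
  have hq' : (3 - X * 8 + X ^ 2 * 4)⁻¹ * (3 - X * 8 + X ^ 2 * 4) = 1 := inv_mul_cancel₀ hq
  linear_combination (T2 * T3 * 144) * hq'

end Stmt0
end StmtAux

/-- For integers `L ≥ 2`, the generating series
`Z(L) := ∑_{k≥0} (12√3)^{-k} · #T¹(L,k)`, where
`#T¹(L,k) = 4^{k-1} (2L+3k-5)!!/(k!(2L+k-1)!!) · L·C(2L,L)`,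
equals `6^L (2L-5)!!/(8√3 · L!)` (with the convention `(-1)!! = 1`,
realized here by truncated subtraction on `ℕ`). -/
theorem statement0 (L : ℕ) (hL : 2 ≤ L) :
    ∑' k : ℕ,
      ((12 * Real.sqrt 3)⁻¹) ^ k *
        ((4 : ℝ) ^ ((k : ℤ) - 1) *
            (Nat.doubleFactorial (2 * L + 3 * k - 5) : ℝ) /
            ((Nat.factorial k : ℝ) * (Nat.doubleFactorial (2 * L + k - 1) : ℝ)) *
          ((L : ℝ) * (Nat.choose (2 * L) L : ℝ)))
      = 6 ^ L * (Nat.doubleFactorial (2 * L - 5) : ℝ) /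
          (8 * Real.sqrt 3 * (Nat.factorial L : ℝ)) :=
  Stmt0.statement0' L hL
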